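/- Let T > 0, C > 0, N a positive natural number and k = T/N with k ≤ 1/4. Suppose a_0, a_1, …, a_N and b_1, …, b_N are nonnegative real numbers satisfying a_n ≤ ((1 + Ck)/(1 − 2k))·a_{n−1} + (Ck/(1 − 2k))·b_n for all 1 ≤ n ≤ N. Then for every 0 ≤ n ≤ N, a_n ≤ e^{2(C+2)T}·(a_0 + 2Ck·Σ_{m=1}^n b_m). -/

import Mathlib

/-- Discrete Gronwall lemma: if `k = T/N ≤ 1/4` and the nonnegative numbers `a_n`, `b_n`
satisfy `a_n ≤ ((1+Ck)/(1-2k)) a_{n-1} + (Ck/(1-2k)) b_n` for `1 ≤ n ≤ N`, then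
`a_n ≤ e^{2(C+2)T} (a_0 + 2Ck Σ_{m=1}^n b_m)` for every `0 ≤ n ≤ N`. -/
theorem stmt_10 (T C : ℝ) (hT : 0 < T) (hC : 0 < C) (N : ℕ) (hN : 0 < N)
    (k : ℝ) (hk : k = T / N) (hk4 : k ≤ 1/4)
    (a b : ℕ → ℝ) (ha : ∀ n ≤ N, 0 ≤ a n) (hb : ∀ n, 1 ≤ n → n ≤ N → 0 ≤ b n)
    (hrec : ∀ n, 1 ≤ n → n ≤ N →
      a n ≤ ((1 + C*k)/(1 - 2*k)) * a (n-1) + (C*k/(1 - 2*k)) * b n) :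
    ∀ n ≤ N, a n ≤ Real.exp (2*(C+2)*T) * (a 0 + 2*C*k * ∑ m ∈ Finset.Icc 1 n, b m) := by
  have hNpos : (0:ℝ) < N := by exact_mod_cast hN
  have hkpos : 0 < k := by rw [hk]; positivity
  have h2k : (0:ℝ) < 1 - 2*k := by linarith
  set r := (1 + C*k)/(1-2*k) with hr
  have hCk : 0 ≤ C*k := mul_nonneg hC.le hkpos.le
  have h4k : (0:ℝ) ≤ 1 - 4*k := by linarith
  have hr1 : 1 ≤ r := by
    rw [hr, le_div_iff₀ h2k]; nlinarith
  have hrexp : r ≤ Real.exp (2*(C+2)*k) := by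
    have h1 : r ≤ (1+C*k)*(1+4*k) := by
      rw [hr, div_le_iff₀ h2k]; nlinarith [mul_nonneg (mul_nonneg (by linarith : (0:ℝ) ≤ 1 + C*k) hkpos.le) h4k]
    have h2 : (1+C*k)*(1+4*k) ≤ 1 + 2*(C+2)*k := by nlinarith [mul_nonneg hCk h4k]
    have h3 := Real.add_one_le_exp (2*(C+2)*k)
    linarith
  have hsumnn : ∀ n ≤ N, 0 ≤ ∑ m ∈ Finset.Icc 1 n, b m := by
    intro n hn
    apply Finset.sum_nonneg
    intro m hm
    rw [Finset.mem_Icc] at hm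
    exact hb m hm.1 (le_trans hm.2 hn)
  have key : ∀ n ≤ N, a n ≤ r^n * (a 0 + 2*C*k * ∑ m ∈ Finset.Icc 1 n, b m) := by
    intro n
    induction n with
    | zero => intro _; simp
    | succ n ih =>
      intro hn1
      have hnN : n ≤ N := le_trans (Nat.le_succ n) hn1
      have ihn := ih hnN
      have hrec' := hrec (n+1) (Nat.succ_le_succ (Nat.zero_le n)) hn1
      simp only [Nat.add_sub_cancel] at hrec'
      have hsum : ∑ m ∈ Finset.Icc 1 (n+1), b m
          = (∑ m ∈ Finset.Icc 1 n, b m) + b (n+1) :=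
        Finset.sum_Icc_succ_top (Nat.succ_le_succ (Nat.zero_le n)) b
      have hbnn : 0 ≤ b (n+1) := hb (n+1) (Nat.succ_le_succ (Nat.zero_le n)) hn1
      have hD : C*k/(1-2*k) ≤ 2*(C*k) := by
        rw [div_le_iff₀ h2k]; nlinarith [mul_nonneg hCk h4k]
      have hrpow1 : 1 ≤ r^(n+1) := one_le_pow₀ hr1
      have hrnn : (0:ℝ) ≤ r := le_trans zero_le_one hr1
      set S := ∑ m ∈ Finset.Icc 1 n, b m with hS
      calc a (n+1) ≤ r * a n + (C*k/(1-2*k)) * b (n+1) := hrec'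
        _ ≤ r * (r^n * (a 0 + 2*C*k * S)) + (C*k/(1-2*k)) * b (n+1) := by
            exact add_le_add_left (mul_le_mul_of_nonneg_left ihn hrnn) _
        _ = r^(n+1) * (a 0 + 2*C*k * S) + (C*k/(1-2*k)) * b (n+1) := by
            rw [pow_succ]; ring
        _ ≤ r^(n+1) * (a 0 + 2*C*k * S) + r^(n+1) * (2*C*k * b (n+1)) := by
            have h1 : (C*k/(1-2*k)) * b (n+1) ≤ 2*(C*k) * b (n+1) :=
              mul_le_mul_of_nonneg_right hD hbnn
            have h2 : 2*(C*k) * b (n+1) ≤ r^(n+1) * (2*C*k * b (n+1)) := by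
              nlinarith [mul_nonneg (mul_nonneg (mul_nonneg (by norm_num : (0:ℝ) ≤ 2) hC.le) hkpos.le) hbnn]
            linarith
        _ = r^(n+1) * (a 0 + 2*C*k * (S + b (n+1))) := by ring
        _ = r^(n+1) * (a 0 + 2*C*k * ∑ m ∈ Finset.Icc 1 (n+1), b m) := by rw [hsum]
  intro n hn
  have hXnn : 0 ≤ a 0 + 2*C*k * ∑ m ∈ Finset.Icc 1 n, b m := by
    have := hsumnn n hn
    have ha0 := ha 0 (Nat.zero_le N)
    have h2 : 0 ≤ 2*C*k * ∑ m ∈ Finset.Icc 1 n, b m := mul_nonneg (by positivity) this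
    linarith
  have hrn : r^n ≤ Real.exp (2*(C+2)*T) := by
    calc r^n ≤ (Real.exp (2*(C+2)*k))^n :=
          pow_le_pow_left₀ (le_trans zero_le_one hr1) hrexp n
      _ = Real.exp ((n:ℝ) * (2*(C+2)*k)) := (Real.exp_nat_mul _ n).symm
      _ ≤ Real.exp (2*(C+2)*T) := by
          apply Real.exp_le_exp.mpr
          have hnN : (n:ℝ) ≤ N := by exact_mod_cast hn
          have : (n:ℝ) * k ≤ T := by
            rw [hk]
            rw [div_eq_mul_inv, ← mul_assoc]
            have : (n:ℝ) * T ≤ (N:ℝ) * T := by nlinarith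
            calc (n:ℝ) * T * (N:ℝ)⁻¹ ≤ (N:ℝ) * T * (N:ℝ)⁻¹ := by
                  apply mul_le_mul_of_nonneg_right this (by positivity)
              _ = T := by field_simp
          nlinarith
  calc a n ≤ r^n * (a 0 + 2*C*k * ∑ m ∈ Finset.Icc 1 n, b m) := key n hn
    _ ≤ Real.exp (2*(C+2)*T) * (a 0 + 2*C*k * ∑ m ∈ Finset.Icc 1 n, b m) :=
        mul_le_mul_of_nonneg_right hrn hXnn
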